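/- For every μ > 0, γ ∈ ℝ and n, m ∈ ℕ, the Specialized Chihara polynomials satisfy the orthogonality relation ∫_{F(γ)} P_n(λ;μ,γ) P_m(λ;μ,γ) w(λ;μ,γ) dλ = 2Γ(μ+1/2) δ_{n,m}, where F(γ) = (−∞,−|γ|) ∪ (|γ|,∞). -/

import Mathlib

noncomputable section

open Real MeasureTheory

namespace MinusOne

/-- The μ-number `[n]_μ = n + (1 - (-1)^n) μ`. -/
def munum (μ : ℝ) (n : ℕ) : ℝ := n + (1 - (-1 : ℝ) ^ n) * μ

/-- The μ-factorial `[n]_μ! = [1]_μ [2]_μ ⋯ [n]_μ`. -/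
def mufact (μ : ℝ) (n : ℕ) : ℝ := ∏ k ∈ Finset.range n, munum μ (k + 1)

/-- Pochhammer symbol `(a)_k = a (a+1) ⋯ (a+k-1)`. -/
def poch (a : ℝ) (k : ℕ) : ℝ := ∏ i ∈ Finset.range k, (a + i)

/-- Laguerre polynomial `L_n^{(α)}(x)`. -/
def laguerre (α : ℝ) (n : ℕ) (x : ℝ) : ℝ :=
  (poch (α + 1) n / (Nat.factorial n : ℝ)) *
    ∑ k ∈ Finset.range (n + 1),
      poch (-(n : ℝ)) k / (poch (α + 1) k * (Nat.factorial k : ℝ)) * x ^ k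

/-- Specialized Chihara polynomials `P_n(x; μ, γ)`. -/
def P (μ γ : ℝ) (n : ℕ) (x : ℝ) : ℝ :=
  if n % 2 = 0 then
    (-1 : ℝ) ^ (n / 2) *
      Real.sqrt ((Nat.factorial (n / 2) : ℝ) * Real.Gamma (μ + 1/2) /
        Real.Gamma (((n / 2 : ℕ) : ℝ) + μ + 1/2)) *
      laguerre (μ - 1/2) (n / 2) ((x ^ 2 - γ ^ 2) / 2)
  else
    (-1 : ℝ) ^ (n / 2) *
      Real.sqrt ((Nat.factorial (n / 2) : ℝ) * Real.Gamma (μ + 3/2) /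
        Real.Gamma (((n / 2 : ℕ) : ℝ) + μ + 3/2)) *
      ((x - γ) / Real.sqrt (2 * μ + 1)) *
      laguerre (μ + 1/2) (n / 2) ((x ^ 2 - γ ^ 2) / 2)

/-- Chihara weight function `w(x; μ, γ)`. -/
def w (μ γ : ℝ) (x : ℝ) : ℝ :=
  Real.sign x * (x + γ) * ((x ^ 2 - γ ^ 2) / 2) ^ (μ - 1/2) *
    Real.exp (-((x ^ 2 - γ ^ 2) / 2))

/-- The set `F(γ) = (-∞, -|γ|) ∪ (|γ|, ∞)`. -/
def Fset (γ : ℝ) : Set ℝ := Set.Iio (-|γ|) ∪ Set.Ioi (|γ|)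

/-- Normalized Chihara weight `W = w / (2 Γ(μ+1/2))`. -/
def Wn (μ γ : ℝ) (x : ℝ) : ℝ := w μ γ x / (2 * Real.Gamma (μ + 1/2))

/-- The measure `W(x; μ, γ) dx` on `F(γ)`. -/
def meas1 (μ γ : ℝ) : Measure ℝ :=
  (volume.restrict (Fset γ)).withDensity fun x => ENNReal.ofReal (Wn μ γ x)

/-- The region `G = {|λ2| > |λ1| > |c|}`. -/
def Gset (c : ℝ) : Set (ℝ × ℝ) := {p : ℝ × ℝ | |c| < |p.1| ∧ |p.1| < |p.2|}

/-- The measure `W(λ1; μ1, c ε1) W(λ2; μ2, λ1 ε2) dλ1 dλ2` on `G`. -/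
def meas2 (μ1 μ2 c ε1 ε2 : ℝ) : Measure (ℝ × ℝ) :=
  ((volume : Measure (ℝ × ℝ)).restrict (Gset c)).withDensity
    fun p => ENNReal.ofReal (Wn μ1 (c * ε1) p.1 * Wn μ2 (p.1 * ε2) p.2)

/-- The region `G⁽³⁾ = {|λ3| > |λ2| > |λ1| > |c|}`. -/
def G3set (c : ℝ) : Set (ℝ × ℝ × ℝ) :=
  {p : ℝ × ℝ × ℝ | |c| < |p.1| ∧ |p.1| < |p.2.1| ∧ |p.2.1| < |p.2.2|}

/-- The three-variable measure on `G⁽³⁾`. -/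
def meas3 (μ1 μ2 μ3 c ε1 ε2 ε3 : ℝ) : Measure (ℝ × ℝ × ℝ) :=
  ((volume : Measure (ℝ × ℝ × ℝ)).restrict (G3set c)).withDensity
    fun p => ENNReal.ofReal
      (Wn μ1 (c * ε1) p.1 * Wn μ2 (p.1 * ε2) p.2.1 * Wn μ3 (p.2.1 * ε3) p.2.2)

/-- Big −1 Jacobi polynomials `J_n(x; a, b, c)`. -/
def J (a b c : ℝ) (n : ℕ) (x : ℝ) : ℝ :=
  if n % 2 = 0 then
    (∑ k ∈ Finset.range (n + 1),
       poch (-(n : ℝ) / 2) k * poch (((n : ℝ) + a + b + 2) / 2) k /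
         (poch ((a + 1) / 2) k * (Nat.factorial k : ℝ)) * ((1 - x ^ 2) / (1 - c ^ 2)) ^ k)
    + ((n : ℝ) * (1 - x) / ((1 + c) * (a + 1))) *
      ∑ k ∈ Finset.range (n + 1),
        poch (1 - (n : ℝ) / 2) k * poch (((n : ℝ) + a + b + 2) / 2) k /
          (poch ((a + 3) / 2) k * (Nat.factorial k : ℝ)) * ((1 - x ^ 2) / (1 - c ^ 2)) ^ k
  else
    (∑ k ∈ Finset.range (n + 1),
       poch (-((n : ℝ) - 1) / 2) k * poch (((n : ℝ) + a + b + 1) / 2) k /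
         (poch ((a + 1) / 2) k * (Nat.factorial k : ℝ)) * ((1 - x ^ 2) / (1 - c ^ 2)) ^ k)
    - (((n : ℝ) + a + b + 1) * (1 - x) / ((1 + c) * (a + 1))) *
      ∑ k ∈ Finset.range (n + 1),
        poch (-((n : ℝ) - 1) / 2) k * poch (((n : ℝ) + a + b + 3) / 2) k /
          (poch ((a + 3) / 2) k * (Nat.factorial k : ℝ)) * ((1 - x ^ 2) / (1 - c ^ 2)) ^ k

/-- Recurrence coefficient `A_n` for the Big −1 Jacobi polynomials. -/
def JA (a b c : ℝ) (n : ℕ) : ℝ :=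
  if n % 2 = 0 then ((n : ℝ) + a + 1) * (c + 1) / (2 * n + a + b + 2)
  else (1 - c) * ((n : ℝ) + a + b + 1) / (2 * n + a + b + 2)

/-- Recurrence coefficient `C_n` for the Big −1 Jacobi polynomials. -/
def JC (a b c : ℝ) (n : ℕ) : ℝ :=
  if n % 2 = 0 then (n : ℝ) * (1 - c) / (2 * n + a + b)
  else ((n : ℝ) + b) * (1 + c) / (2 * n + a + b)

/-- Big −1 Jacobi weight `ω(x; a, b, c)`. -/
def Jweight (a b c : ℝ) (x : ℝ) : ℝ :=
  Real.sign x * (1 + x) * (x - c) * (x ^ 2 - c ^ 2) ^ ((b - 1) / 2) *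
    (1 - x ^ 2) ^ ((a - 1) / 2)

/-- Big −1 Jacobi normalization `h_n(a, b)`. -/
def hJ (a b : ℝ) (n : ℕ) : ℝ :=
  if n % 2 = 0 then
    2 * Real.Gamma (((n : ℝ) + b + 1) / 2) * Real.Gamma (((n : ℝ) + a + 3) / 2) *
      (Nat.factorial (n / 2) : ℝ) /
      (((n : ℝ) + a + 1) * Real.Gamma (((n : ℝ) + a + b + 2) / 2) * (poch ((a + 1) / 2) (n / 2)) ^ 2)
  else
    ((n : ℝ) + a + b + 1) * Real.Gamma (((n : ℝ) + b + 2) / 2) * Real.Gamma (((n : ℝ) + a + 2) / 2) *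
      (Nat.factorial ((n - 1) / 2) : ℝ) /
      (2 * Real.Gamma (((n : ℝ) + a + b + 3) / 2) * (poch ((a + 1) / 2) ((n + 1) / 2)) ^ 2)

/-- Coupling factor `K_j(y; ν2, ν1; t, σ)`. -/
def K (ν2 ν1 t σ : ℝ) (j : ℕ) (y : ℝ) : ℝ :=
  Real.sqrt (((y ^ 2 - t ^ 2) / 2) ^ j * ((y - t * σ) / (y - (-1 : ℝ) ^ j * t * σ)) *
    Real.Gamma (ν1 + 1/2) * Real.Gamma (ν2 + 1/2) /
    (Real.Gamma (ν1 + ν2 + j + 1) * hJ (2 * ν2) (2 * ν1) j))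

/-- Dual −1 Hahn polynomials `R_n(x; η, ξ, N)`. -/
def Rdual (η ξ : ℝ) (N : ℕ) (n : ℕ) (x : ℝ) : ℝ :=
  if N % 2 = 0 then
    if n % 2 = 0 then
      (16 : ℝ) ^ (n / 2) * poch (-(N : ℝ) / 2) (n / 2) * poch ((1 - 2 * η - N) / 2) (n / 2) *
        ∑ k ∈ Finset.range (n / 2 + 1),
          poch (-((n : ℝ) / 2)) k * poch (-(η + ξ + N) / 2 + (x + 1) / 4) k *
            poch (-(η + ξ + N) / 2 - (x + 1) / 4) k /
            (poch (-(N : ℝ) / 2) k * poch ((1 - 2 * η - N) / 2) k * (Nat.factorial k : ℝ))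
    else
      (16 : ℝ) ^ (n / 2) * poch (1 - (N : ℝ) / 2) (n / 2) * poch ((1 - 2 * η - N) / 2) (n / 2) *
        (x + 2 * η + 2 * ξ + 1) *
        ∑ k ∈ Finset.range (n / 2 + 1),
          poch (-(((n : ℝ) - 1) / 2)) k * poch (-(η + ξ + N) / 2 + (x + 1) / 4) k *
            poch (-(η + ξ + N) / 2 - (x + 1) / 4) k /
            (poch (1 - (N : ℝ) / 2) k * poch ((1 - 2 * η - N) / 2) k * (Nat.factorial k : ℝ))
  else
    if n % 2 = 0 then
      (16 : ℝ) ^ (n / 2) * poch ((1 - (N : ℝ)) / 2) (n / 2) * poch ((2 * ξ + 1) / 2) (n / 2) *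
        ∑ k ∈ Finset.range (n / 2 + 1),
          poch (-((n : ℝ) / 2)) k * poch ((η + ξ + 1) / 2 + (x + 1) / 4) k *
            poch ((η + ξ + 1) / 2 - (x + 1) / 4) k /
            (poch ((1 - (N : ℝ)) / 2) k * poch ((2 * ξ + 1) / 2) k * (Nat.factorial k : ℝ))
    else
      (16 : ℝ) ^ (n / 2) * poch ((1 - (N : ℝ)) / 2) (n / 2) * poch ((2 * ξ + 3) / 2) (n / 2) *
        (x + 2 * ξ - 2 * η + 1) *
        ∑ k ∈ Finset.range (n / 2 + 1),
          poch (-(((n : ℝ) - 1) / 2)) k * poch ((η + ξ + 1) / 2 + (x + 1) / 4) k *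
            poch ((η + ξ + 1) / 2 - (x + 1) / 4) k /
            (poch ((1 - (N : ℝ)) / 2) k * poch ((2 * ξ + 3) / 2) k * (Nat.factorial k : ℝ))

/-- Grid points `y_s` for the dual −1 Hahn polynomials. -/
def ygrid (η ξ : ℝ) (N : ℕ) (s : ℕ) : ℝ :=
  if N % 2 = 0 then (-1 : ℝ) ^ s * (2 * s - 2 * η - 2 * ξ - 2 * N - 1)
  else (-1 : ℝ) ^ s * (2 * s + 2 * η + 2 * ξ + 1)

/-- Weights `ϖ_s(η, ξ, N)` for the dual −1 Hahn polynomials. -/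
def varpi (η ξ : ℝ) (N : ℕ) (s : ℕ) : ℝ :=
  if N % 2 = 0 then
    if s % 2 = 0 then
      (-1 : ℝ) ^ (s / 2) * poch (-(N : ℝ) / 2) (s / 2) * poch (-(N : ℝ) / 2 - η + 1/2) (s / 2) *
        poch (-(N : ℝ) - η - ξ) (s / 2) /
        ((Nat.factorial (s / 2) : ℝ) * poch (-(N : ℝ) / 2 - ξ + 1/2) (s / 2) *
          poch (-(N : ℝ) / 2 - η - ξ) (s / 2))
    else
      (-1 : ℝ) ^ (s / 2) * poch (-(N : ℝ) / 2) (s / 2 + 1) * poch (-(N : ℝ) / 2 - η + 1/2) (s / 2) *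
        poch (-(N : ℝ) - η - ξ) (s / 2) /
        ((Nat.factorial (s / 2) : ℝ) * poch (-(N : ℝ) / 2 - ξ + 1/2) (s / 2) *
          poch (-(N : ℝ) / 2 - η - ξ) (s / 2 + 1))
  else
    if s % 2 = 0 then
      (-1 : ℝ) ^ (s / 2) * poch ((1 - (N : ℝ)) / 2) (s / 2) * poch (ξ + 1/2) (s / 2) *
        poch (η + ξ + 1) (s / 2) /
        ((Nat.factorial (s / 2) : ℝ) * poch (η + 1/2) (s / 2) *
          poch (((N : ℝ) + 3) / 2 + η + ξ) (s / 2))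
    else
      (-1 : ℝ) ^ (s / 2) * poch ((1 - (N : ℝ)) / 2) (s / 2) * poch (ξ + 1/2) (s / 2 + 1) *
        poch (η + ξ + 1) (s / 2) /
        ((Nat.factorial (s / 2) : ℝ) * poch (η + 1/2) (s / 2 + 1) *
          poch (((N : ℝ) + 3) / 2 + η + ξ) (s / 2))

/-- Normalizations `ν_n(η, ξ, N)` for the dual −1 Hahn polynomials. -/
def nuDual (η ξ : ℝ) (N : ℕ) (n : ℕ) : ℝ :=
  if N % 2 = 0 then
    if n % 2 = 0 then
      (16 : ℝ) ^ n * (Nat.factorial (n / 2) : ℝ) * poch (-(N : ℝ) / 2) (n / 2) *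
        poch (ξ + 1/2) (n / 2) * poch ((-(N : ℝ) - 2 * η + 1) / 2) (n / 2) *
        (poch (-(N : ℝ) - η - ξ) (N / 2) / poch ((-(N : ℝ) - 2 * ξ + 1) / 2) (N / 2))
    else
      -(16 : ℝ) ^ n * (Nat.factorial (n / 2) : ℝ) * poch (-(N : ℝ) / 2) (n / 2 + 1) *
        poch (ξ + 1/2) (n / 2 + 1) * poch ((-(N : ℝ) - 2 * η + 1) / 2) (n / 2) *
        (poch (-(N : ℝ) - η - ξ) (N / 2) / poch ((-(N : ℝ) - 2 * ξ + 1) / 2) (N / 2))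
  else
    if n % 2 = 0 then
      (16 : ℝ) ^ n * (Nat.factorial (n / 2) : ℝ) * poch ((1 - (N : ℝ)) / 2) (n / 2) *
        poch (ξ + 1/2) (n / 2) * poch (-(N : ℝ) / 2 - η) (n / 2) *
        (poch (η + ξ + 1) ((N + 1) / 2) / poch (η + 1/2) ((N + 1) / 2))
    else
      -(16 : ℝ) ^ n * (Nat.factorial (n / 2) : ℝ) * poch ((1 - (N : ℝ)) / 2) (n / 2) *
        poch (ξ + 1/2) (n / 2 + 1) * poch (-(N : ℝ) / 2 - η) (n / 2 + 1) *
        (poch (η + ξ + 1) ((N + 1) / 2) / poch (η + 1/2) ((N + 1) / 2))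

/-- The points `z_s = (-1)^{s+N+1} (2s + 2η + 2ξ + 1)`. -/
def zgrid (η ξ : ℝ) (N : ℕ) (s : ℕ) : ℝ :=
  (-1 : ℝ) ^ (s + N + 1) * (2 * s + 2 * η + 2 * ξ + 1)

/-- The reversed weights `ρ_s(η, ξ, N)`. -/
def rhoDual (η ξ : ℝ) (N : ℕ) (s : ℕ) : ℝ :=
  if N % 2 = 0 then varpi η ξ N (N - s) else varpi η ξ N s

/-- The quantity `ν_0(η, ξ, N)`. -/
def nu0 (η ξ : ℝ) (N : ℕ) : ℝ :=
  if N % 2 = 0 then poch (-(N : ℝ) - η - ξ) (N / 2) / poch ((-(N : ℝ) - 2 * ξ + 1) / 2) (N / 2)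
  else poch (η + ξ + 1) ((N + 1) / 2) / poch (η + 1/2) ((N + 1) / 2)

/-- Bannai–Ito recurrence coefficient `A_n`. -/
def BIA (ρ1 ρ2 r1 r2 : ℝ) (n : ℕ) : ℝ :=
  if n % 2 = 0 then
    ((n : ℝ) + 2 * ρ1 - 2 * r1 + 1) * ((n : ℝ) + 2 * ρ1 - 2 * r2 + 1) /
      (4 * ((n : ℝ) + (ρ1 + ρ2 - r1 - r2) + 1))
  else
    ((n : ℝ) + 2 * (ρ1 + ρ2 - r1 - r2) + 1) * ((n : ℝ) + 2 * ρ1 + 2 * ρ2 + 1) /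
      (4 * ((n : ℝ) + (ρ1 + ρ2 - r1 - r2) + 1))

/-- Bannai–Ito recurrence coefficient `C_n`. -/
def BIC (ρ1 ρ2 r1 r2 : ℝ) (n : ℕ) : ℝ :=
  if n % 2 = 0 then
    -((n : ℝ) * ((n : ℝ) - 2 * r1 - 2 * r2)) / (4 * ((n : ℝ) + (ρ1 + ρ2 - r1 - r2)))
  else
    -(((n : ℝ) + 2 * ρ2 - 2 * r2) * ((n : ℝ) + 2 * ρ2 - 2 * r1)) /
      (4 * ((n : ℝ) + (ρ1 + ρ2 - r1 - r2)))

/-- Monic Bannai–Ito polynomials, defined by the three-term recurrence. -/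
def BI (ρ1 ρ2 r1 r2 : ℝ) : ℕ → ℝ → ℝ
  | 0 => fun _ => 1
  | 1 => fun x => x - (ρ1 - BIA ρ1 ρ2 r1 r2 0 - BIC ρ1 ρ2 r1 r2 0)
  | (n + 2) => fun x =>
      (x - (ρ1 - BIA ρ1 ρ2 r1 r2 (n + 1) - BIC ρ1 ρ2 r1 r2 (n + 1))) * BI ρ1 ρ2 r1 r2 (n + 1) x
      - BIA ρ1 ρ2 r1 r2 n * BIC ρ1 ρ2 r1 r2 (n + 1) * BI ρ1 ρ2 r1 r2 n x

/-- Bannai–Ito normalization `η_n`. -/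
def BIeta (ρ1 ρ2 r1 r2 : ℝ) (n : ℕ) : ℝ :=
  (-1 : ℝ) ^ n * poch (ρ1 - r1 + 1/2) (n / 2 + n % 2) * poch (ρ2 - r1 + 1/2) (n / 2 + n % 2) *
    poch (1 - r1 - r2) (n / 2) /
    poch (((n / 2 : ℕ) : ℝ) + (ρ1 + ρ2 - r1 - r2) + 1) (n / 2 + n % 2)

/-- Bannai–Ito grid points `x_k`. -/
def BIx (ρ1 : ℝ) (k : ℕ) : ℝ := (-1 : ℝ) ^ k * ((k : ℝ) / 2 + ρ1 + 1/4) - 1/4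

/-- Bannai–Ito weights `w_k`. -/
def BIw (ρ1 ρ2 r1 r2 : ℝ) (k : ℕ) : ℝ :=
  ((-1 : ℝ) ^ k / (Nat.factorial (k / 2) : ℝ)) *
    (poch (ρ1 - r1 + 1/2) (k / 2 + k % 2) * poch (ρ1 - r2 + 1/2) (k / 2 + k % 2) *
      poch (ρ1 + ρ2 + 1) (k / 2) * poch (2 * ρ1 + 1) (k / 2)) /
    (poch (ρ1 + r1 + 1/2) (k / 2 + k % 2) * poch (ρ1 + r2 + 1/2) (k / 2 + k % 2) *
      poch (ρ1 - ρ2 + 1) (k / 2))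

/-- Bannai–Ito normalization `h_n` for even truncation parameter `N = 2 Ne`. -/
def BIhEven (ρ1 ρ2 r1 r2 : ℝ) (Ne : ℕ) (n : ℕ) : ℝ :=
  (Nat.factorial (n / 2) : ℝ) * (Nat.factorial Ne : ℝ) * poch (1 + 2 * ρ1) Ne *
    poch (1 + ρ1 + ρ2) (n / 2) *
    poch (1 + ((n / 2 : ℕ) : ℝ) + (ρ1 + ρ2 - r1 - r2)) (Ne - n / 2) *
    poch (1/2 + ρ1 - r1) (n / 2 + n % 2) * poch (1/2 + ρ2 - r1) (n / 2 + n % 2) /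
  ((Nat.factorial (Ne - n / 2 - n % 2) : ℝ) * poch (1/2 + ρ1 + r1) (Ne - n / 2) *
    poch (1/2 + ((n / 2 : ℕ) : ℝ) + ((n % 2 : ℕ) : ℝ) + ρ2 - r2) (Ne - n / 2 - n % 2) *
    (poch (1 + (n : ℝ) + (ρ1 + ρ2 - r1 - r2)) (n / 2 + n % 2)) ^ 2)

/-- Bannai–Ito normalization `h_n` for odd truncation parameter `N = 2 Ne + 1`. -/
def BIhOdd (ρ1 ρ2 r1 r2 : ℝ) (Ne : ℕ) (n : ℕ) : ℝ :=
  (Nat.factorial (n / 2) : ℝ) * (Nat.factorial Ne : ℝ) * poch (1 + 2 * ρ1) (Ne + 1) *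
    poch (1 - r1 - r2) (n / 2) *
    poch (1 + ((n / 2 : ℕ) : ℝ) + (ρ1 + ρ2 - r1 - r2)) (Ne + 1 - n / 2) *
    poch (1/2 + ρ1 - r1) (n / 2 + n % 2) * poch (1/2 + ρ1 - r2) (n / 2 + n % 2) /
  ((Nat.factorial (Ne - n / 2) : ℝ) * poch (1/2 + ρ1 + r1) (Ne + 1 - n / 2 - n % 2) *
    poch (1/2 + ((n / 2 : ℕ) : ℝ) + ((n % 2 : ℕ) : ℝ) + ρ2 - r2) (Ne + 1 - n / 2 - n % 2) *
    (poch (1 + (n : ℝ) + (ρ1 + ρ2 - r1 - r2)) (n / 2 + n % 2)) ^ 2)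

/-- Bannai–Ito normalization `h_n` with truncation parameter `N`. -/
def BIh (ρ1 ρ2 r1 r2 : ℝ) (N : ℕ) (n : ℕ) : ℝ :=
  if N % 2 = 0 then BIhEven ρ1 ρ2 r1 r2 (N / 2) n else BIhOdd ρ1 ρ2 r1 r2 (N / 2) n

/-- Phase `φ(n1, n2, j)` of the Clebsch–Gordan coefficients. -/
def cgPhi (n1 n2 j : ℕ) : ℕ := n1 * (n1 - 1) / 2 + j * (j + 1) / 2 + n1 * (n1 + n2 + 1)

/-- Clebsch–Gordan coefficients `C^{N,j}_{n1,n2}` of `osp(1|2)`. -/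
def CG (μ1 μ2 ε2 : ℝ) (n1 n2 j : ℕ) : ℝ :=
  (-1 : ℝ) ^ (cgPhi n1 n2 j) * (ε2 / 2) ^ n1 *
    Real.sqrt (mufact μ2 n2 * rhoDual μ2 μ1 (n1 + n2) j /
      (mufact μ1 n1 * mufact μ2 (n1 + n2) * nu0 μ2 μ1 (n1 + n2))) *
    Rdual μ2 μ1 (n1 + n2) n1 (zgrid μ2 μ1 (n1 + n2) j)

/-- Phase `φ` of the Racah coefficients. -/
def racahPhi (j12 j23 j123 : ℕ) : ℕ :=
  j123 * ((j12 - 1) * j12 / 2) + (j123 + 1) * (j23 + (j12 + 1) * j12 / 2)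

/-- Racah coefficients of `osp(1|2)` in terms of Bannai–Ito polynomials. -/
def racah (μ1 μ2 μ3 ε3 : ℝ) (j12 j23 j123 : ℕ) : ℝ :=
  (-1 : ℝ) ^ (racahPhi j12 j23 j123) * ε3 ^ j12 *
    Real.sqrt (BIw ((μ2 + μ3) / 2) ((μ1 + (-1 : ℝ) ^ j123 * (μ1 + μ2 + μ3 + 1 + j123)) / 2)
        ((μ3 - μ2) / 2) (((-1 : ℝ) ^ j123 * (μ1 + μ2 + μ3 + 1 + j123) - μ1) / 2) j23 /
      BIh ((μ2 + μ3) / 2) ((μ1 + (-1 : ℝ) ^ j123 * (μ1 + μ2 + μ3 + 1 + j123)) / 2)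
        ((μ3 - μ2) / 2) (((-1 : ℝ) ^ j123 * (μ1 + μ2 + μ3 + 1 + j123) - μ1) / 2) j123 j12) *
    BI ((μ2 + μ3) / 2) ((μ1 + (-1 : ℝ) ^ j123 * (μ1 + μ2 + μ3 + 1 + j123)) / 2)
      ((μ3 - μ2) / 2) (((-1 : ℝ) ^ j123 * (μ1 + μ2 + μ3 + 1 + j123) - μ1) / 2) j12
      (BIx ((μ2 + μ3) / 2) j23)

/-- The hypergeometric function `₀F₁(; b; x)`. -/
def hyp0F1 (b x : ℝ) : ℝ := ∑' k : ℕ, x ^ k / (poch b k * (Nat.factorial k : ℝ))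

/-- Truncated Gauss hypergeometric sum `₂F₁` (used for terminating series). -/
def hyp2F1fin (m : ℕ) (a1 a2 b x : ℝ) : ℝ :=
  ∑ k ∈ Finset.range m, poch a1 k * poch a2 k / (poch b k * (Nat.factorial k : ℝ)) * x ^ k

/-- The function `f_e(j)` appearing in the bilinear generating function. -/
def fe (μ1 μ2 ε2 z1 z2 : ℝ) (j : ℕ) : ℝ :=
  (-1 : ℝ) ^ (j / 2 + j % 2) * (z2 ^ j / Real.sqrt (mufact μ2 j)) *
    Real.sqrt (poch (1/2 + μ1) (j / 2 + j % 2) /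
      poch (((j / 2 : ℕ) : ℝ) + ((j % 2 : ℕ) : ℝ) + 1 + μ1 + μ2) (j / 2 + j % 2)) *
    (hyp2F1fin (j + 1) (-((j / 2 : ℕ) : ℝ)) (1/2 - ((j / 2 : ℕ) : ℝ) - ((j % 2 : ℕ) : ℝ) - μ2)
        (1/2 + μ1) (-(z1 / z2) ^ 2)
      + ((-1 : ℝ) ^ (j % 2) * z1 * ((j : ℝ) + 2 * μ2 * ((j % 2 : ℕ) : ℝ)) /
          (z2 * ε2 * (1 + 2 * μ1))) *
        hyp2F1fin (j + 1) (1 - ((j / 2 : ℕ) : ℝ) - ((j % 2 : ℕ) : ℝ)) (1/2 - ((j / 2 : ℕ) : ℝ) - μ2)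
          (3/2 + μ1) (-(z1 / z2) ^ 2))

/-- The function `f_o(j)` appearing in the bilinear generating function. -/
def fo (μ1 μ2 ε2 z1 z2 : ℝ) (j : ℕ) : ℝ :=
  (-1 : ℝ) ^ (j / 2 + j % 2) * (Real.sqrt ((z1 / z2) ^ 2 + 1))⁻¹ *
    (z2 ^ j / Real.sqrt (mufact μ2 j)) *
    Real.sqrt (poch (1/2 + μ1) (j / 2 + j % 2) /
      poch (((j / 2 : ℕ) : ℝ) + ((j % 2 : ℕ) : ℝ) + 1 + μ1 + μ2) (j / 2 + j % 2)) *
    (hyp2F1fin (j + 1) (-((j / 2 : ℕ) : ℝ) - ((j % 2 : ℕ) : ℝ)) (-1/2 - ((j / 2 : ℕ) : ℝ) - μ2)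
        (1/2 + μ1) (-(z1 / z2) ^ 2)
      + ((-1 : ℝ) ^ (j % 2) * z1 * ((j : ℝ) + 1 + 2 * μ1 + 2 * μ2 * ((j % 2 : ℕ) : ℝ)) /
          (z2 * ε2 * (1 + 2 * μ1))) *
        hyp2F1fin (j + 1) (-((j / 2 : ℕ) : ℝ)) (1/2 - ((j / 2 : ℕ) : ℝ) - ((j % 2 : ℕ) : ℝ) - μ2)
          (3/2 + μ1) (-(z1 / z2) ^ 2))

/-- Dunkl realization: `J₊`. -/
def Jp (f : ℝ → ℝ) : ℝ → ℝ := fun z => z * f z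

/-- Dunkl realization: `J₋` (the Dunkl derivative). -/
def Jm (μ : ℝ) (f : ℝ → ℝ) : ℝ → ℝ := fun z => deriv f z + (μ / z) * (f z - f (-z))

/-- Dunkl realization: `J₀`. -/
def J0op (μ : ℝ) (f : ℝ → ℝ) : ℝ → ℝ := fun z => z * deriv f z + (μ + 1/2) * f z

/-- Reflection operator `R`. -/
def Rop (f : ℝ → ℝ) : ℝ → ℝ := fun z => f (-z)

open Set

lemma poch_zero (a : ℝ) : poch a 0 = 1 := Finset.prod_range_zero _

lemma poch_succ (a : ℝ) (k : ℕ) : poch a (k + 1) = poch a k * (a + k) :=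
  Finset.prod_range_succ _ _

lemma poch_succ' (a : ℝ) (k : ℕ) : poch a (k + 1) = a * poch (a + 1) k := by
  rw [poch, Finset.prod_range_succ']
  simp only [Nat.cast_zero, add_zero, mul_comm]
  congr 1
  apply Finset.prod_congr rfl
  intro i _
  push_cast; ring

lemma poch_pos {a : ℝ} (ha : 0 < a) (k : ℕ) : 0 < poch a k := by
  apply Finset.prod_pos
  intro i _
  positivity

lemma poch_neg_nat (n k : ℕ) : poch (-(n : ℝ)) k = (-1) ^ k * (n.descFactorial k : ℝ) := by
  induction k with
  | zero => simp [poch_zero]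
  | succ k ih =>
      rw [poch_succ, ih, Nat.descFactorial_succ]
      by_cases h : k < n
      · have : ((n - k : ℕ) : ℝ) = (n : ℝ) - k := by
          have := Nat.cast_sub (le_of_lt h) (R := ℝ)
          linarith [this]
        push_cast [Nat.cast_sub (le_of_lt h)]
        ring
      · push_neg at h
        have hz : ((n - k : ℕ) : ℝ) = 0 := by
          rw [Nat.sub_eq_zero_of_le h]; simp
        push_cast [hz]
        rcases eq_or_lt_of_le h with he | hl
        · subst he
          ring
        · rw [Nat.descFactorial_eq_zero_iff_lt.2 hl]
          push_cast
          ring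

lemma poch_ne_zero {a : ℝ} (ha : 0 < a) (k : ℕ) : poch a k ≠ 0 := (poch_pos ha k).ne'

/-- Chu–Vandermonde in binomial form. -/
lemma chuB : ∀ n : ℕ, ∀ b c : ℝ, 0 < c →
    ∑ k ∈ Finset.range (n + 1), (-1 : ℝ) ^ k * (n.choose k : ℝ) * poch b k / poch c k
      = poch (c - b) n / poch c n := by
  intro n
  induction n with
  | zero => intro b c hc; simp [poch_zero]
  | succ n ih =>
      intro b c hc
      have key : ∑ k ∈ Finset.range (n + 2), (-1 : ℝ) ^ k * ((n+1).choose k : ℝ) * poch b k / poch c k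
          = (∑ k ∈ Finset.range (n + 1), (-1 : ℝ) ^ k * (n.choose k : ℝ) * poch b k / poch c k)
            - (b / c) * ∑ k ∈ Finset.range (n + 1),
                (-1 : ℝ) ^ k * (n.choose k : ℝ) * poch (b+1) k / poch (c+1) k := by
        rw [Finset.sum_range_succ' (fun k => (-1 : ℝ) ^ k * ((n+1).choose k : ℝ) * poch b k / poch c k) (n+1)]
        have split : ∀ k ∈ Finset.range (n + 1),
            (-1 : ℝ) ^ (k+1) * ((n+1).choose (k+1) : ℝ) * poch b (k+1) / poch c (k+1)
            = (-1 : ℝ) ^ (k+1) * ((n).choose (k+1) : ℝ) * poch b (k+1) / poch c (k+1)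
              - (b / c) * ((-1 : ℝ) ^ k * (n.choose k : ℝ) * poch (b+1) k / poch (c+1) k) := by
          intro k _
          rw [Nat.choose_succ_succ, poch_succ' b, poch_succ' c]
          have hcne : c ≠ 0 := hc.ne'
          have hpc : poch (c+1) k ≠ 0 := poch_ne_zero (by linarith) k
          push_cast
          field_simp
          ring
        rw [Finset.sum_congr rfl split, Finset.sum_sub_distrib]
        have e1 : ∑ k ∈ Finset.range (n + 1),
            (-1 : ℝ) ^ (k+1) * ((n).choose (k+1) : ℝ) * poch b (k+1) / poch c (k+1)
            + (-1 : ℝ) ^ 0 * ((n+1).choose 0 : ℝ) * poch b 0 / poch c 0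
            = ∑ k ∈ Finset.range (n + 2), (-1 : ℝ) ^ k * ((n).choose k : ℝ) * poch b k / poch c k := by
          rw [Finset.sum_range_succ' (fun k => (-1 : ℝ) ^ k * ((n).choose k : ℝ) * poch b k / poch c k) (n+1)]
          simp
        have e2 : ∑ k ∈ Finset.range (n + 2), (-1 : ℝ) ^ k * ((n).choose k : ℝ) * poch b k / poch c k
            = ∑ k ∈ Finset.range (n + 1), (-1 : ℝ) ^ k * ((n).choose k : ℝ) * poch b k / poch c k := by
          rw [Finset.sum_range_succ]
          simp [Nat.choose_succ_self]
        rw [← Finset.mul_sum]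
        linarith [e1, e2]
      rw [key, ih b c hc, ih (b+1) (c+1) (by linarith)]
      have e3 : poch c (n+1) = c * poch (c+1) n := poch_succ' c n
      have e4 : poch c (n+1) = poch c n * (c + n) := poch_succ c n
      have e5 : poch (c - b) (n+1) = poch (c - b) n * (c - b + n) := poch_succ _ n
      have h1 : poch c n ≠ 0 := poch_ne_zero hc n
      have h2 : poch (c+1) n ≠ 0 := poch_ne_zero (by linarith) n
      have h3 : (c : ℝ) ≠ 0 := hc.ne'
      have e6 : (c + 1) - (b + 1) = c - b := by ring
      have h5 : c * poch (c+1) n = poch c n * (c + n) := e3.symm.trans e4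
      rw [e6, e5, e4]
      field_simp
      linear_combination (poch (c-b) n * b) * h5

lemma chu (n : ℕ) (b c : ℝ) (hc : 0 < c) :
    ∑ k ∈ Finset.range (n + 1), poch (-(n : ℝ)) k * poch b k / (poch c k * (Nat.factorial k : ℝ))
      = poch (c - b) n / poch c n := by
  rw [← chuB n b c hc]
  apply Finset.sum_congr rfl
  intro k _
  rw [poch_neg_nat, Nat.descFactorial_eq_factorial_mul_choose]
  have : (Nat.factorial k : ℝ) ≠ 0 := Nat.cast_ne_zero.2 (Nat.factorial_ne_zero k)
  have hpc : poch c k ≠ 0 := poch_ne_zero hc k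
  push_cast
  field_simp

lemma Gamma_poch {s : ℝ} (hs : 0 < s) (k : ℕ) :
    Real.Gamma (s + k) = Real.Gamma s * poch s k := by
  induction k with
  | zero => simp [poch_zero]
  | succ k ih =>
      have h1 : s + (k + 1 : ℕ) = (s + k) + 1 := by push_cast; ring
      rw [h1, Real.Gamma_add_one (by positivity), ih, poch_succ]
      ring

lemma mom_int {β : ℝ} (hβ : 0 < β + 1) :
    IntegrableOn (fun u : ℝ => u ^ β * Real.exp (-u)) (Set.Ioi 0) := by
  have h := Real.GammaIntegral_convergent hβ
  have e : β + 1 - 1 = β := by ring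
  rw [e] at h
  exact h.congr_fun (fun u _ => mul_comm _ _) measurableSet_Ioi

lemma mom_val {β : ℝ} (hβ : 0 < β + 1) :
    ∫ u in Set.Ioi (0:ℝ), u ^ β * Real.exp (-u) = Real.Gamma (β + 1) := by
  rw [Real.Gamma_eq_integral hβ]
  apply setIntegral_congr_fun measurableSet_Ioi
  intro u _
  dsimp only
  have e : β + 1 - 1 = β := by ring
  rw [e]
  ring

lemma mom_nat_int {β : ℝ} (hβ : 0 < β + 1) (k : ℕ) :
    IntegrableOn (fun u : ℝ => u ^ k * (u ^ β * Real.exp (-u))) (Set.Ioi 0) := by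
  have hk : (0:ℝ) ≤ k := Nat.cast_nonneg k
  apply (mom_int (β := β + k) (by linarith)).congr_fun ?_ measurableSet_Ioi
  intro u hu
  dsimp only
  rw [Real.rpow_add hu, Real.rpow_natCast]
  ring

lemma mom_nat_val {β : ℝ} (hβ : 0 < β + 1) (k : ℕ) :
    ∫ u in Set.Ioi (0:ℝ), u ^ k * (u ^ β * Real.exp (-u))
      = Real.Gamma (β + 1) * poch (β + 1) k := by
  have hk : (0:ℝ) ≤ k := Nat.cast_nonneg k
  have h2 : (0:ℝ) < (β + k) + 1 := by linarith
  rw [← Gamma_poch hβ k]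
  have h3 : β + 1 + (k:ℝ) = β + (k:ℝ) + 1 := by ring
  rw [h3, ← mom_val h2]
  apply setIntegral_congr_fun measurableSet_Ioi
  intro u hu
  dsimp only
  rw [Real.rpow_add hu, Real.rpow_natCast]
  ring


lemma poch_add (a : ℝ) (j k : ℕ) : poch a (j + k) = poch a j * poch (a + j) k := by
  induction k with
  | zero => simp [poch_zero]
  | succ k ih =>
      have : j + (k + 1) = (j + k) + 1 := by ring
      rw [this, poch_succ, ih, poch_succ]
      push_cast
      ring

lemma laguerre_mul_expand (α : ℝ) (n : ℕ) (g : ℝ → ℝ) (u : ℝ) :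
    laguerre α n u * g u
      = ∑ k ∈ Finset.range (n + 1),
          (poch (α + 1) n / (Nat.factorial n : ℝ)
            * (poch (-(n : ℝ)) k / (poch (α + 1) k * (Nat.factorial k : ℝ))))
          * (u ^ k * g u) := by
  rw [laguerre, mul_assoc, Finset.sum_mul, Finset.mul_sum]
  apply Finset.sum_congr rfl
  intro k _
  ring

lemma Lmom_int {α : ℝ} (hα : 0 < α + 1) (n j : ℕ) :
    IntegrableOn (fun u : ℝ => laguerre α n u * (u ^ j * (u ^ α * Real.exp (-u))))
      (Set.Ioi 0) := by
  have he : ∀ u : ℝ, laguerre α n u * (u ^ j * (u ^ α * Real.exp (-u)))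
      = ∑ k ∈ Finset.range (n + 1),
          (poch (α + 1) n / (Nat.factorial n : ℝ)
            * (poch (-(n : ℝ)) k / (poch (α + 1) k * (Nat.factorial k : ℝ))))
          * (u ^ (k + j) * (u ^ α * Real.exp (-u))) := by
    intro u
    rw [laguerre_mul_expand α n (fun u => u ^ j * (u ^ α * Real.exp (-u))) u]
    apply Finset.sum_congr rfl
    intro k _
    rw [pow_add]
    ring
  apply IntegrableOn.congr_fun ?_ (fun u _ => (he u).symm) measurableSet_Ioi
  apply integrable_finset_sum
  intro k _
  exact (mom_nat_int hα (k + j)).const_mul _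

lemma Lmom_val {α : ℝ} (hα : 0 < α + 1) (n j : ℕ) :
    ∫ u in Set.Ioi (0:ℝ), laguerre α n u * (u ^ j * (u ^ α * Real.exp (-u)))
      = Real.Gamma (α + 1) * poch (α + 1) j * poch (-(j : ℝ)) n / (Nat.factorial n : ℝ) := by
  have he : Set.EqOn (fun u : ℝ => laguerre α n u * (u ^ j * (u ^ α * Real.exp (-u))))
      (fun u : ℝ => ∑ k ∈ Finset.range (n + 1),
          (poch (α + 1) n / (Nat.factorial n : ℝ)
            * (poch (-(n : ℝ)) k / (poch (α + 1) k * (Nat.factorial k : ℝ))))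
          * (u ^ (k + j) * (u ^ α * Real.exp (-u)))) (Set.Ioi 0) := by
    intro u _
    dsimp only
    rw [laguerre_mul_expand α n (fun u => u ^ j * (u ^ α * Real.exp (-u))) u]
    apply Finset.sum_congr rfl
    intro k _
    rw [pow_add]
    ring
  rw [setIntegral_congr_fun measurableSet_Ioi he,
    integral_finset_sum _ (fun k _ => ((mom_nat_int hα (k + j)).const_mul _))]
  have hval : ∀ k ∈ Finset.range (n + 1),
      ∫ u in Set.Ioi (0:ℝ),
        (poch (α + 1) n / (Nat.factorial n : ℝ)
          * (poch (-(n : ℝ)) k / (poch (α + 1) k * (Nat.factorial k : ℝ))))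
        * (u ^ (k + j) * (u ^ α * Real.exp (-u)))
      = (Real.Gamma (α + 1) * poch (α + 1) j * (poch (α + 1) n / (Nat.factorial n : ℝ)))
        * (poch (-(n : ℝ)) k * poch (α + 1 + j) k / (poch (α + 1) k * (Nat.factorial k : ℝ))) := by
    intro k _
    rw [integral_const_mul, mom_nat_val hα (k + j)]
    have : poch (α + 1) (k + j) = poch (α + 1) j * poch (α + 1 + j) k := by
      rw [add_comm k j, poch_add]
    rw [this]
    ring
  rw [Finset.sum_congr rfl hval, ← Finset.mul_sum, chu n (α + 1 + j) (α + 1) hα]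
  have e1 : α + 1 - (α + 1 + (j : ℝ)) = -(j : ℝ) := by ring
  rw [e1]
  have h2 : poch (α + 1) n ≠ 0 := poch_ne_zero hα n
  field_simp

lemma Lorth_le {α : ℝ} (hα : 0 < α + 1) {n m : ℕ} (hmn : m ≤ n) :
    ∫ u in Set.Ioi (0:ℝ), laguerre α n u * laguerre α m u * (u ^ α * Real.exp (-u))
      = if n = m then Real.Gamma (α + 1) * poch (α + 1) n / (Nat.factorial n : ℝ) else 0 := by
  have he : Set.EqOn (fun u : ℝ => laguerre α n u * laguerre α m u * (u ^ α * Real.exp (-u)))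
      (fun u : ℝ => ∑ j ∈ Finset.range (m + 1),
          (poch (α + 1) m / (Nat.factorial m : ℝ)
            * (poch (-(m : ℝ)) j / (poch (α + 1) j * (Nat.factorial j : ℝ))))
          * (laguerre α n u * (u ^ j * (u ^ α * Real.exp (-u))))) (Set.Ioi 0) := by
    intro u _
    dsimp only
    have : laguerre α n u * laguerre α m u * (u ^ α * Real.exp (-u))
        = laguerre α m u * (laguerre α n u * (u ^ α * Real.exp (-u))) := by ring
    rw [this, laguerre_mul_expand α m (fun u => laguerre α n u * (u ^ α * Real.exp (-u))) u]
    apply Finset.sum_congr rfl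
    intro j _
    ring
  rw [setIntegral_congr_fun measurableSet_Ioi he,
    integral_finset_sum _ (fun j _ => ((Lmom_int hα n j).const_mul _))]
  have hval : ∀ j ∈ Finset.range (m + 1),
      ∫ u in Set.Ioi (0:ℝ),
        (poch (α + 1) m / (Nat.factorial m : ℝ)
          * (poch (-(m : ℝ)) j / (poch (α + 1) j * (Nat.factorial j : ℝ))))
        * (laguerre α n u * (u ^ j * (u ^ α * Real.exp (-u))))
      = (poch (α + 1) m / (Nat.factorial m : ℝ)
          * (poch (-(m : ℝ)) j / (poch (α + 1) j * (Nat.factorial j : ℝ))))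
        * (Real.Gamma (α + 1) * poch (α + 1) j * poch (-(j : ℝ)) n / (Nat.factorial n : ℝ)) := by
    intro j _
    rw [integral_const_mul, Lmom_val hα n j]
  rw [Finset.sum_congr rfl hval]
  rcases eq_or_lt_of_le hmn with heq | hlt
  · subst heq
    rw [if_pos rfl]
    rw [Finset.sum_eq_single_of_mem m (Finset.self_mem_range_succ m)]
    · have hself : poch (-(m : ℝ)) m = (-1) ^ m * (Nat.factorial m : ℝ) := by
        rw [poch_neg_nat, Nat.descFactorial_self]
      rw [hself]
      have h1 : poch (α + 1) m ≠ 0 := poch_ne_zero hα m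
      have h2 : (Nat.factorial m : ℝ) ≠ 0 := Nat.cast_ne_zero.2 (Nat.factorial_ne_zero m)
      have hsq : ((-1:ℝ) ^ m) * ((-1:ℝ) ^ m) = 1 := by
        rw [← pow_add]
        exact Even.neg_one_pow ⟨m, rfl⟩
      field_simp
      linear_combination hsq
    · intro j hjmem hj
      have : poch (-(j : ℝ)) m = 0 := by
        rw [poch_neg_nat, Nat.descFactorial_eq_zero_iff_lt.2
          (lt_of_le_of_ne (Nat.lt_succ_iff.1 (Finset.mem_range.1 hjmem)) hj)]
        simp
      rw [this]
      ring
  · rw [if_neg (by omega)]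
    apply Finset.sum_eq_zero
    intro j hj
    have hjn : j < n := lt_of_le_of_lt (Nat.lt_succ_iff.1 (Finset.mem_range.1 hj)) hlt
    have : poch (-(j : ℝ)) n = 0 := by
      rw [poch_neg_nat, Nat.descFactorial_eq_zero_iff_lt.2 hjn]
      simp
    rw [this]
    ring

lemma Lorth {α : ℝ} (hα : 0 < α + 1) (n m : ℕ) :
    ∫ u in Set.Ioi (0:ℝ), laguerre α n u * laguerre α m u * (u ^ α * Real.exp (-u))
      = if n = m then Real.Gamma (α + 1) * poch (α + 1) n / (Nat.factorial n : ℝ) else 0 := by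
  rcases le_total m n with h | h
  · exact Lorth_le hα h
  · have := Lorth_le hα h
    have hcomm : ∀ u : ℝ, laguerre α m u * laguerre α n u * (u ^ α * Real.exp (-u))
        = laguerre α n u * laguerre α m u * (u ^ α * Real.exp (-u)) := fun u => by ring
    rw [show (fun u : ℝ => laguerre α m u * laguerre α n u * (u ^ α * Real.exp (-u)))
        = fun u : ℝ => laguerre α n u * laguerre α m u * (u ^ α * Real.exp (-u))
      from funext hcomm] at this
    rw [this]
    rcases eq_or_ne n m with rfl | hne
    · simp
    · rw [if_neg (fun h' => hne h'.symm), if_neg hne]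

lemma fset_frame (γ c : ℝ) (hc : |c| ≤ |γ|) (f G : ℝ → ℝ)
    (hGi : IntegrableOn G (Set.Ioi 0))
    (hGc : ContinuousOn G (Set.Ioi 0))
    (h1 : ∀ x : ℝ, |γ| < x → f x = (x + c) * G ((x ^ 2 - γ ^ 2) / 2))
    (h2 : ∀ x : ℝ, x < -|γ| → f x = -((x + c) * G ((x ^ 2 - γ ^ 2) / 2))) :
    ∫ x in Fset γ, f x = 2 * ∫ u in Set.Ioi (0:ℝ), G u := by
  set a := |γ| with ha
  set φ : ℝ → ℝ := fun u => Real.sqrt (2 * u + γ ^ 2) with hφ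
  have hpos : ∀ u ∈ Ioi (0:ℝ), 0 < 2 * u + γ ^ 2 := fun u hu => by
    have := mem_Ioi.1 hu; nlinarith [sq_nonneg γ]
  have hφpos : ∀ u ∈ Ioi (0:ℝ), 0 < φ u := fun u hu => Real.sqrt_pos.2 (hpos u hu)
  have hφgt : ∀ u ∈ Ioi (0:ℝ), a < φ u := by
    intro u hu
    have h0 : a = Real.sqrt (γ ^ 2) := by rw [Real.sqrt_sq_eq_abs]
    rw [h0]
    exact Real.sqrt_lt_sqrt (sq_nonneg γ) (by have := mem_Ioi.1 hu; nlinarith)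
  have hψφ : ∀ u ∈ Ioi (0:ℝ), ((φ u) ^ 2 - γ ^ 2) / 2 = u := by
    intro u hu
    rw [hφ]
    dsimp only
    rw [Real.sq_sqrt (hpos u hu).le]
    ring
  have hder : ∀ u ∈ Ioi (0:ℝ), HasDerivWithinAt φ (1 / φ u) (Ioi 0) u := by
    intro u hu
    have hlin : HasDerivAt (fun u : ℝ => 2 * u + γ ^ 2) 2 u := by
      simpa using ((hasDerivAt_id u).const_mul 2).add_const (γ ^ 2)
    have hcomp := (Real.hasDerivAt_sqrt (hpos u hu).ne').comp u hlin
    have hd : 1 / (2 * Real.sqrt (2 * u + γ ^ 2)) * 2 = 1 / φ u := by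
      rw [hφ]
      dsimp only
      rw [one_div, one_div, mul_inv]
      ring
    rw [← hd]
    exact hcomp.hasDerivWithinAt
  have himg : φ '' Ioi 0 = Ioi a := by
    apply Set.eq_of_subset_of_subset
    · rintro x ⟨u, hu, rfl⟩
      exact hφgt u hu
    · intro x hx
      have hx' : a < x := hx
      have hxpos : 0 < x := lt_of_le_of_lt (abs_nonneg γ) hx'
      refine ⟨(x ^ 2 - γ ^ 2) / 2, ?_, ?_⟩
      · have hga : γ ^ 2 = a ^ 2 := (sq_abs γ).symm
        have : γ ^ 2 < x ^ 2 := by nlinarith [abs_nonneg γ]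
        exact mem_Ioi.2 (by linarith)
      · show Real.sqrt (2 * ((x ^ 2 - γ ^ 2) / 2) + γ ^ 2) = x
        rw [show 2 * ((x ^ 2 - γ ^ 2) / 2) + γ ^ 2 = x ^ 2 by ring, Real.sqrt_sq hxpos.le]
  have hinj : InjOn φ (Ioi 0) := by
    apply StrictMonoOn.injOn
    intro u hu v hv huv
    exact Real.sqrt_lt_sqrt (hpos u hu).le (by linarith)
  have hder2 : ∀ u ∈ Ioi (0:ℝ), HasDerivWithinAt (fun u => -φ u) (-(1 / φ u)) (Ioi 0) u :=
    fun u hu => (hder u hu).neg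
  have hinj2 : InjOn (fun u => -φ u) (Ioi 0) :=
    fun u hu v hv h => hinj hu hv (neg_injective h)
  have himg2 : (fun u => -φ u) '' Ioi 0 = Iio (-a) := by
    apply Set.eq_of_subset_of_subset
    · rintro x ⟨u, hu, rfl⟩
      have := hφgt u hu
      exact mem_Iio.2 (by dsimp only; linarith)
    · intro x hx
      have hx' : a < -x := by have := mem_Iio.1 hx; linarith
      obtain ⟨u, hu, he⟩ : -x ∈ φ '' Ioi 0 := himg ▸ mem_Ioi.2 hx'
      exact ⟨u, hu, by dsimp only; rw [he]; ring⟩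
  set J1 : ℝ → ℝ := fun u => ((φ u + c) / φ u) * G u with hJ1
  set J2 : ℝ → ℝ := fun u => ((φ u - c) / φ u) * G u with hJ2
  have hJeq1 : ∀ u ∈ Ioi (0:ℝ), |1 / φ u| • f (φ u) = J1 u := by
    intro u hu
    rw [abs_of_pos (one_div_pos.2 (hφpos u hu)), smul_eq_mul,
      h1 (φ u) (hφgt u hu), hψφ u hu, hJ1]
    ring
  have hJeq2 : ∀ u ∈ Ioi (0:ℝ), |-(1 / φ u)| • f (-φ u) = J2 u := by
    intro u hu
    rw [abs_neg, abs_of_pos (one_div_pos.2 (hφpos u hu)), smul_eq_mul,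
      h2 (-φ u) (by have := hφgt u hu; linarith)]
    rw [show ((-φ u) ^ 2 - γ ^ 2) / 2 = ((φ u) ^ 2 - γ ^ 2) / 2 by ring, hψφ u hu, hJ2]
    ring
  have hφcont : Continuous φ := Real.continuous_sqrt.comp (by continuity)
  have hφne : ∀ u ∈ Ioi (0:ℝ), φ u ≠ 0 := fun u hu => (hφpos u hu).ne'
  have hJ1c : ContinuousOn J1 (Ioi 0) :=
    (((hφcont.continuousOn.add continuousOn_const).div hφcont.continuousOn hφne).mul hGc)
  have hJ2c : ContinuousOn J2 (Ioi 0) :=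
    (((hφcont.continuousOn.sub continuousOn_const).div hφcont.continuousOn hφne).mul hGc)
  have hb1 : ∀ u ∈ Ioi (0:ℝ), ‖J1 u‖ ≤ ‖2 * G u‖ := by
    intro u hu
    rw [hJ1]
    dsimp only
    rw [Real.norm_eq_abs, Real.norm_eq_abs, abs_mul, abs_mul]
    have h2' : |(2:ℝ)| = 2 := by norm_num
    rw [h2']
    apply mul_le_mul_of_nonneg_right ?_ (abs_nonneg _)
    rw [abs_div, abs_of_pos (hφpos u hu), div_le_iff₀ (hφpos u hu)]
    have hca : |c| ≤ a := hc
    have := (hφgt u hu).le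
    calc |φ u + c| ≤ |φ u| + |c| := abs_add_le _ _
      _ = φ u + |c| := by rw [abs_of_pos (hφpos u hu)]
      _ ≤ 2 * φ u := by linarith
  have hb2 : ∀ u ∈ Ioi (0:ℝ), ‖J2 u‖ ≤ ‖2 * G u‖ := by
    intro u hu
    rw [hJ2]
    dsimp only
    rw [Real.norm_eq_abs, Real.norm_eq_abs, abs_mul, abs_mul]
    have h2' : |(2:ℝ)| = 2 := by norm_num
    rw [h2']
    apply mul_le_mul_of_nonneg_right ?_ (abs_nonneg _)
    rw [abs_div, abs_of_pos (hφpos u hu), div_le_iff₀ (hφpos u hu)]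
    have hca : |c| ≤ a := hc
    have := (hφgt u hu).le
    calc |φ u - c| ≤ |φ u| + |c| := abs_sub _ _
      _ = φ u + |c| := by rw [abs_of_pos (hφpos u hu)]
      _ ≤ 2 * φ u := by linarith
  have hJ1i : IntegrableOn J1 (Ioi 0) := by
    apply Integrable.mono (hGi.const_mul 2) (hJ1c.aestronglyMeasurable measurableSet_Ioi)
    exact (ae_restrict_iff' measurableSet_Ioi).2 (ae_of_all _ hb1)
  have hJ2i : IntegrableOn J2 (Ioi 0) := by
    apply Integrable.mono (hGi.const_mul 2) (hJ2c.aestronglyMeasurable measurableSet_Ioi)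
    exact (ae_restrict_iff' measurableSet_Ioi).2 (ae_of_all _ hb2)
  have hfI1 : IntegrableOn f (Ioi a) := by
    rw [← himg,
      integrableOn_image_iff_integrableOn_abs_deriv_smul measurableSet_Ioi hder hinj]
    exact hJ1i.congr_fun (fun u hu => (hJeq1 u hu).symm) measurableSet_Ioi
  have hfI2 : IntegrableOn f (Iio (-a)) := by
    rw [← himg2,
      integrableOn_image_iff_integrableOn_abs_deriv_smul measurableSet_Ioi hder2 hinj2]
    exact hJ2i.congr_fun (fun u hu => (hJeq2 u hu).symm) measurableSet_Ioi
  have hp1 : ∫ x in Ioi a, f x = ∫ u in Ioi (0:ℝ), J1 u := by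
    rw [← himg, integral_image_eq_integral_abs_deriv_smul measurableSet_Ioi hder hinj]
    exact setIntegral_congr_fun measurableSet_Ioi hJeq1
  have hp2 : ∫ x in Iio (-a), f x = ∫ u in Ioi (0:ℝ), J2 u := by
    rw [← himg2, integral_image_eq_integral_abs_deriv_smul measurableSet_Ioi hder2 hinj2]
    exact setIntegral_congr_fun measurableSet_Ioi hJeq2
  have hsplit : ∫ x in Fset γ, f x = (∫ x in Iio (-a), f x) + ∫ x in Ioi a, f x := by
    exact setIntegral_union
      ((Set.Iic_disjoint_Ioi (neg_le_self (abs_nonneg γ))).mono_left Iio_subset_Iic_self)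
      measurableSet_Ioi hfI2 hfI1
  rw [hsplit, hp1, hp2, ← integral_add hJ2i hJ1i]
  have hsum : Set.EqOn (fun u => J2 u + J1 u) (fun u => 2 * G u) (Ioi 0) := by
    intro u hu
    dsimp only
    rw [hJ1, hJ2]
    dsimp only
    rw [div_mul_eq_mul_div, div_mul_eq_mul_div, ← add_div,
      show (φ u - c) * G u + (φ u + c) * G u = 2 * G u * φ u by ring,
      mul_div_assoc, div_self (hφne u hu), mul_one]
  rw [setIntegral_congr_fun measurableSet_Ioi hsum, integral_const_mul]

lemma fset_measurable (γ : ℝ) : MeasurableSet (Fset γ) :=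
  measurableSet_Iio.union measurableSet_Ioi

lemma odd_vanish (γ : ℝ) (f : ℝ → ℝ) (hf : ∀ x, f (-x) = -f x) :
    ∫ x in Fset γ, f x = 0 := by
  have hsym : (Neg.neg : ℝ → ℝ) ⁻¹' (Fset γ) = Fset γ := by
    ext x
    simp only [Set.mem_preimage, Fset, Set.mem_union, Set.mem_Iio, Set.mem_Ioi]
    constructor
    · rintro (h | h)
      · right; linarith
      · left; linarith
    · rintro (h | h)
      · right; linarith
      · left; linarith
  have hmap : Measure.map (Neg.neg : ℝ → ℝ) (volume.restrict (Fset γ))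
      = volume.restrict (Fset γ) := by
    have h1 := Measure.restrict_map (measurable_neg : Measurable (Neg.neg : ℝ → ℝ))
      (fset_measurable γ) (μ := (volume : Measure ℝ))
    rw [hsym, Measure.map_neg_eq_self (volume : Measure ℝ)] at h1
    exact h1.symm
  have key : ∫ x in Fset γ, f x = ∫ x in Fset γ, f (-x) := by
    conv_lhs => rw [← hmap]
    have := MeasureTheory.integral_map_equiv
      (MeasurableEquiv.neg ℝ) f (μ := volume.restrict (Fset γ))
    exact this
  have : ∫ x in Fset γ, f (-x) = -∫ x in Fset γ, f x := by
    simp only [hf]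
    exact integral_neg f
  linarith [key, this]

lemma laguerre_continuous (α : ℝ) (n : ℕ) : Continuous (laguerre α n) := by
  unfold laguerre
  exact continuous_const.mul
    (continuous_finset_sum _ fun k _ => continuous_const.mul (continuous_pow k))

lemma rpow_exp_continuousOn (α : ℝ) :
    ContinuousOn (fun u : ℝ => u ^ α * Real.exp (-u)) (Set.Ioi 0) := by
  apply ContinuousOn.mul
  · intro u hu
    exact (Real.continuousAt_rpow_const u α (Or.inl (ne_of_gt hu))).continuousWithinAt
  · exact (Real.continuous_exp.comp continuous_neg).continuousOn

lemma Lpair_int {α : ℝ} (hα : 0 < α + 1) (n m : ℕ) :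
    IntegrableOn (fun u : ℝ => laguerre α n u * laguerre α m u * (u ^ α * Real.exp (-u)))
      (Set.Ioi 0) := by
  have he : ∀ u : ℝ, laguerre α n u * laguerre α m u * (u ^ α * Real.exp (-u))
      = ∑ j ∈ Finset.range (m + 1),
          (poch (α + 1) m / (Nat.factorial m : ℝ)
            * (poch (-(m : ℝ)) j / (poch (α + 1) j * (Nat.factorial j : ℝ))))
          * (laguerre α n u * (u ^ j * (u ^ α * Real.exp (-u)))) := by
    intro u
    have h0 : laguerre α n u * laguerre α m u * (u ^ α * Real.exp (-u))
        = laguerre α m u * (laguerre α n u * (u ^ α * Real.exp (-u))) := by ring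
    rw [h0, laguerre_mul_expand α m (fun u => laguerre α n u * (u ^ α * Real.exp (-u))) u]
    apply Finset.sum_congr rfl
    intro j _
    ring
  apply IntegrableOn.congr_fun ?_ (fun u _ => (he u).symm) measurableSet_Ioi
  apply integrable_finset_sum
  intro j _
  exact (Lmom_int hα n j).const_mul _

lemma parity_ne {n m : ℕ} (hn : n % 2 = 0) (hm : ¬ m % 2 = 0) : n ≠ m := by omega


/-- orthogonality of the Specialized Chihara polynomials. -/
theorem chihara_orthogonality (μ γ : ℝ) (hμ : 0 < μ) (n m : ℕ) :
    ∫ x in Fset γ, P μ γ n x * P μ γ m x * w μ γ x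
      = if n = m then 2 * Real.Gamma (μ + 1/2) else 0 := by
  have hμ12 : 0 < μ + 1/2 := by linarith
  have hGpos : 0 < Real.Gamma (μ + 1/2) := Real.Gamma_pos_of_pos hμ12
  by_cases hn : n % 2 = 0 <;> by_cases hm : m % 2 = 0
  -- even-even case
  · set p := n / 2 with hp
    set q := m / 2 with hq
    have hα : 0 < (μ - 1/2) + 1 := by linarith
    set Cp := (-1 : ℝ) ^ p * Real.sqrt ((Nat.factorial p : ℝ) * Real.Gamma (μ + 1/2) /
        Real.Gamma ((p : ℝ) + μ + 1/2)) with hCp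
    set Cq := (-1 : ℝ) ^ q * Real.sqrt ((Nat.factorial q : ℝ) * Real.Gamma (μ + 1/2) /
        Real.Gamma ((q : ℝ) + μ + 1/2)) with hCq
    set G : ℝ → ℝ := fun u => (Cp * Cq) *
      (laguerre (μ - 1/2) p u * laguerre (μ - 1/2) q u
        * (u ^ (μ - 1/2) * Real.exp (-u))) with hG
    have hGi : IntegrableOn G (Set.Ioi 0) := (Lpair_int hα p q).const_mul _
    have hGc : ContinuousOn G (Set.Ioi 0) := by
      apply continuousOn_const.mul
      exact (((laguerre_continuous _ p).continuousOn.mul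
        (laguerre_continuous _ q).continuousOn).mul (rpow_exp_continuousOn _))
    have h1 : ∀ x : ℝ, |γ| < x →
        P μ γ n x * P μ γ m x * w μ γ x = (x + γ) * G ((x ^ 2 - γ ^ 2) / 2) := by
      intro x hx
      have hx0 : 0 < x := lt_of_le_of_lt (abs_nonneg γ) hx
      have hs1 : Real.sign x = 1 := Real.sign_of_pos hx0
      simp only [P, w, if_pos hn, if_pos hm, hG, hCp, hCq, hs1, ← hp, ← hq]
      ring
    have h2 : ∀ x : ℝ, x < -|γ| →
        P μ γ n x * P μ γ m x * w μ γ x = -((x + γ) * G ((x ^ 2 - γ ^ 2) / 2)) := by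
      intro x hx
      have hx0 : x < 0 := lt_of_lt_of_le hx (by simp [neg_nonpos, abs_nonneg])
      have hs1 : Real.sign x = -1 := Real.sign_of_neg hx0
      simp only [P, w, if_pos hn, if_pos hm, hG, hCp, hCq, hs1, ← hp, ← hq]
      ring
    rw [fset_frame γ γ le_rfl _ G hGi hGc h1 h2]
    rw [hG]
    rw [integral_const_mul, Lorth hα p q]
    rcases eq_or_ne n m with rfl | hne
    · rw [if_pos rfl, if_pos rfl]
      have hqp : q = p := hq.trans hp.symm
      have hmm1 : ((-1:ℝ) ^ p) * ((-1:ℝ) ^ p) = 1 := by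
        rw [← pow_add]; exact Even.neg_one_pow ⟨p, rfl⟩
      have hGp2 : 0 < Real.Gamma ((p : ℝ) + μ + 1/2) :=
        Real.Gamma_pos_of_pos (by positivity)
      have harg : 0 ≤ (Nat.factorial p : ℝ) * Real.Gamma (μ + 1/2) /
          Real.Gamma ((p : ℝ) + μ + 1/2) :=
        div_nonneg (mul_nonneg (Nat.cast_nonneg _) hGpos.le) hGp2.le
      have hss := Real.mul_self_sqrt harg
      have hsq : Cp * Cq = (Nat.factorial p : ℝ) * Real.Gamma (μ + 1/2) /
          Real.Gamma ((p : ℝ) + μ + 1/2) := by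
        rw [hCp, hCq, hqp,
          show ∀ s : ℝ, ((-1:ℝ)^p * s) * ((-1:ℝ)^p * s)
            = (((-1:ℝ)^p) * ((-1:ℝ)^p)) * (s * s) from fun s => by ring,
          hmm1, one_mul, hss]
      have hGamp : Real.Gamma ((p : ℝ) + μ + 1/2)
          = Real.Gamma (μ + 1/2) * poch (μ + 1/2) p := by
        rw [show (p : ℝ) + μ + 1/2 = (μ + 1/2) + (p : ℕ) by push_cast; ring]
        exact Gamma_poch hμ12 p
      have e1 : μ - 1/2 + 1 = μ + 1/2 := by ring
      rw [hsq, e1, hGamp]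
      have hpo : poch (μ + 1/2) p ≠ 0 := poch_ne_zero hμ12 p
      have hfac : (Nat.factorial p : ℝ) ≠ 0 := Nat.cast_ne_zero.2 (Nat.factorial_ne_zero p)
      field_simp [hpo, hfac, hGpos.ne']
      rw [div_eq_iff (by
        have hg : Real.Gamma ((μ * 2 + 1) / 2) ≠ 0 :=
          (Real.Gamma_pos_of_pos (by linarith)).ne'
        have hpp : poch ((μ * 2 + 1) / 2) p ≠ 0 := poch_ne_zero (by linarith) p
        exact poch_ne_zero (by linarith) p)]
      ring
    · have hpq : p ≠ q := by
        intro h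
        apply hne
        omega
      rw [if_neg (fun h => hpq (by rw [h])), if_neg hne]
      ring
  -- even-odd case
  · rw [if_neg (parity_ne hn hm)]
    apply odd_vanish
    intro x
    simp only [P, w, if_pos hn, if_neg hm, neg_sq, Real.sign_neg]
    ring
  -- odd-even case
  · rw [if_neg (Ne.symm (parity_ne hm hn))]
    apply odd_vanish
    intro x
    simp only [P, w, if_neg hn, if_pos hm, neg_sq, Real.sign_neg]
    ring
  -- odd-odd case
  · set p := n / 2 with hp
    set q := m / 2 with hq
    have hα : 0 < (μ + 1/2) + 1 := by linarith
    have h2μ : (0:ℝ) < 2 * μ + 1 := by linarith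
    have hsrt : Real.sqrt (2 * μ + 1) * Real.sqrt (2 * μ + 1) = 2 * μ + 1 :=
      Real.mul_self_sqrt h2μ.le
    have hsne : Real.sqrt (2 * μ + 1) ≠ 0 := (Real.sqrt_pos.2 h2μ).ne'
    set Cp := (-1 : ℝ) ^ p * Real.sqrt ((Nat.factorial p : ℝ) * Real.Gamma (μ + 3/2) /
        Real.Gamma ((p : ℝ) + μ + 3/2)) with hCp
    set Cq := (-1 : ℝ) ^ q * Real.sqrt ((Nat.factorial q : ℝ) * Real.Gamma (μ + 3/2) /
        Real.Gamma ((q : ℝ) + μ + 3/2)) with hCq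
    set G : ℝ → ℝ := fun u => (2 * (Cp * Cq) / (2 * μ + 1)) *
      (laguerre (μ + 1/2) p u * laguerre (μ + 1/2) q u
        * (u ^ (μ + 1/2) * Real.exp (-u))) with hG
    have hGi : IntegrableOn G (Set.Ioi 0) := (Lpair_int hα p q).const_mul _
    have hGc : ContinuousOn G (Set.Ioi 0) := by
      apply continuousOn_const.mul
      exact (((laguerre_continuous _ p).continuousOn.mul
        (laguerre_continuous _ q).continuousOn).mul (rpow_exp_continuousOn _))
    have hrpow : ∀ x : ℝ, |γ| < x ∨ x < -|γ| →
        ((x ^ 2 - γ ^ 2) / 2) ^ (μ + 1/2)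
          = ((x ^ 2 - γ ^ 2) / 2) ^ (μ - 1/2) * ((x ^ 2 - γ ^ 2) / 2) := by
      intro x hx
      have hψ : 0 < (x ^ 2 - γ ^ 2) / 2 := by
        have hg : γ ^ 2 = |γ| ^ 2 := (sq_abs γ).symm
        have hga : 0 ≤ |γ| := abs_nonneg γ
        rcases hx with hx | hx
        · nlinarith
        · nlinarith
      have h := Real.rpow_add hψ (μ - 1/2) 1
      rw [Real.rpow_one] at h
      rw [show μ + 1/2 = μ - 1/2 + 1 by ring, h]
    have hsinv : (Real.sqrt (2 * μ + 1))⁻¹ * (Real.sqrt (2 * μ + 1))⁻¹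
        = (2 * μ + 1)⁻¹ := by rw [← mul_inv, hsrt]
    have h1 : ∀ x : ℝ, |γ| < x →
        P μ γ n x * P μ γ m x * w μ γ x = (x + -γ) * G ((x ^ 2 - γ ^ 2) / 2) := by
      intro x hx
      have hx0 : 0 < x := lt_of_le_of_lt (abs_nonneg γ) hx
      have hs1 : Real.sign x = 1 := Real.sign_of_pos hx0
      simp only [P, w, if_neg hn, if_neg hm, hG, hs1, ← hp, ← hq]
      rw [hrpow x (Or.inl hx), div_eq_mul_inv (2 * (Cp * Cq)), ← hsinv]
      ring
    have h2 : ∀ x : ℝ, x < -|γ| →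
        P μ γ n x * P μ γ m x * w μ γ x = -((x + -γ) * G ((x ^ 2 - γ ^ 2) / 2)) := by
      intro x hx
      have hx0 : x < 0 := lt_of_lt_of_le hx (by simp [neg_nonpos, abs_nonneg])
      have hs1 : Real.sign x = -1 := Real.sign_of_neg hx0
      simp only [P, w, if_neg hn, if_neg hm, hG, hs1, ← hp, ← hq]
      rw [hrpow x (Or.inr hx), div_eq_mul_inv (2 * (Cp * Cq)), ← hsinv]
      ring
    rw [fset_frame γ (-γ) (by rw [abs_neg]) _ G hGi hGc h1 h2]
    rw [hG, integral_const_mul, Lorth hα p q]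
    rcases eq_or_ne n m with rfl | hne
    · rw [if_pos rfl, if_pos rfl]
      have hqp : q = p := hq.trans hp.symm
      have hmm1 : ((-1:ℝ) ^ p) * ((-1:ℝ) ^ p) = 1 := by
        rw [← pow_add]; exact Even.neg_one_pow ⟨p, rfl⟩
      have hμ32 : 0 < μ + 3/2 := by linarith
      have hG32 : 0 < Real.Gamma (μ + 3/2) := Real.Gamma_pos_of_pos hμ32
      have hGp2 : 0 < Real.Gamma ((p : ℝ) + μ + 3/2) :=
        Real.Gamma_pos_of_pos (by positivity)
      have harg : 0 ≤ (Nat.factorial p : ℝ) * Real.Gamma (μ + 3/2) /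
          Real.Gamma ((p : ℝ) + μ + 3/2) :=
        div_nonneg (mul_nonneg (Nat.cast_nonneg _) hG32.le) hGp2.le
      have hss := Real.mul_self_sqrt harg
      have hsq : Cp * Cq = (Nat.factorial p : ℝ) * Real.Gamma (μ + 3/2) /
          Real.Gamma ((p : ℝ) + μ + 3/2) := by
        rw [hCp, hCq, hqp,
          show ∀ s : ℝ, ((-1:ℝ)^p * s) * ((-1:ℝ)^p * s)
            = (((-1:ℝ)^p) * ((-1:ℝ)^p)) * (s * s) from fun s => by ring,
          hmm1, one_mul, hss]
      have hGamp : Real.Gamma ((p : ℝ) + μ + 3/2)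
          = Real.Gamma (μ + 3/2) * poch (μ + 3/2) p := by
        rw [show (p : ℝ) + μ + 3/2 = (μ + 3/2) + (p : ℕ) by push_cast; ring]
        exact Gamma_poch hμ32 p
      have e1 : μ + 1/2 + 1 = μ + 3/2 := by ring
      have hadd : Real.Gamma (μ + 3/2) = (μ + 1/2) * Real.Gamma (μ + 1/2) := by
        rw [show μ + 3/2 = (μ + 1/2) + 1 by ring]
        exact Real.Gamma_add_one hμ12.ne'
      rw [hsq, e1, hGamp]
      have hpo : poch (μ + 3/2) p ≠ 0 := poch_ne_zero hμ32 p
      have hfac : (Nat.factorial p : ℝ) ≠ 0 := Nat.cast_ne_zero.2 (Nat.factorial_ne_zero p)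
      have h2μ' : (2 * μ + 1 : ℝ) ≠ 0 := h2μ.ne'
      have hprod : ((Nat.factorial p : ℝ) * Real.Gamma (μ + 3/2)
            / (Real.Gamma (μ + 3/2) * poch (μ + 3/2) p))
          * (Real.Gamma (μ + 3/2) * poch (μ + 3/2) p / (Nat.factorial p : ℝ))
          = Real.Gamma (μ + 3/2) := by
        rw [div_mul_div_comm,
          div_eq_iff (mul_ne_zero (mul_ne_zero hG32.ne' hpo) hfac)]
        ring
      rw [show (2:ℝ) * (2 * ((Nat.factorial p : ℝ) * Real.Gamma (μ + 3/2)
            / (Real.Gamma (μ + 3/2) * poch (μ + 3/2) p)) / (2 * μ + 1)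
            * (Real.Gamma (μ + 3/2) * poch (μ + 3/2) p / (Nat.factorial p : ℝ)))
          = 4 / (2 * μ + 1) * (((Nat.factorial p : ℝ) * Real.Gamma (μ + 3/2)
            / (Real.Gamma (μ + 3/2) * poch (μ + 3/2) p))
            * (Real.Gamma (μ + 3/2) * poch (μ + 3/2) p / (Nat.factorial p : ℝ)))
          from by ring,
        hprod, hadd, div_mul_eq_mul_div, div_eq_iff h2μ']
      ring
    · have hpq : p ≠ q := by
        intro h
        apply hne
        omega
      rw [if_neg (fun h => hpq (by rw [h])), if_neg hne]
      ring

end MinusOne
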